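/- If there exists a conditional pmf p(u|x,y) such that both Markov chains U−X−Y and U−Y−X hold (i.e., I(U;Y|X)=0 and I(U;X|Y)=0) and I(X;Y) ≤ I(X;U) + I(Y;U), then min over p(u|x,y) of max{I(X;Y|U), I(X,Y;U)} = I(X;Y)/2. -/
import Mathlib


open Finset

def IsPMF {Ω : Type*} [Fintype Ω] (p : Ω → ℝ) : Prop :=
  (∀ ω, 0 ≤ p ω) ∧ ∑ ω, p ω = 1

noncomputable def pr {Ω : Type*} [Fintype Ω] {α : Type*} [Fintype α] [DecidableEq α]
    (p : Ω → ℝ) (X : Ω → α) (x : α) : ℝ :=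
  ∑ ω ∈ Finset.univ.filter (fun ω => X ω = x), p ω

/-- Shannon entropy (base 2) of the random variable `X` under `p`. -/
noncomputable def ent {Ω : Type*} [Fintype Ω] {α : Type*} [Fintype α] [DecidableEq α]
    (p : Ω → ℝ) (X : Ω → α) : ℝ :=
  -∑ x, pr p X x * Real.logb 2 (pr p X x)

/-- Conditional entropy H(X | U). -/
noncomputable def centH {Ω : Type*} [Fintype Ω] {α β : Type*} [Fintype α] [DecidableEq α]
    [Fintype β] [DecidableEq β] (p : Ω → ℝ) (X : Ω → α) (U : Ω → β) : ℝ :=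
  ent p (fun ω => (X ω, U ω)) - ent p U

/-- Mutual information I(X;Y). -/
noncomputable def mi {Ω : Type*} [Fintype Ω] {α β : Type*} [Fintype α] [DecidableEq α]
    [Fintype β] [DecidableEq β] (p : Ω → ℝ) (X : Ω → α) (Y : Ω → β) : ℝ :=
  ent p X + ent p Y - ent p (fun ω => (X ω, Y ω))

/-- Conditional mutual information I(X;Y|U). -/
noncomputable def cmi {Ω : Type*} [Fintype Ω] {α β γ : Type*} [Fintype α] [DecidableEq α]
    [Fintype β] [DecidableEq β] [Fintype γ] [DecidableEq γ]
    (p : Ω → ℝ) (X : Ω → α) (Y : Ω → β) (U : Ω → γ) : ℝ :=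
  centH p X U + centH p Y U - centH p (fun ω => (X ω, Y ω)) U

def IndepRV {Ω : Type*} [Fintype Ω] {α β : Type*} [Fintype α] [DecidableEq α]
    [Fintype β] [DecidableEq β] (p : Ω → ℝ) (X : Ω → α) (Y : Ω → β) : Prop :=
  ∀ x y, pr p (fun ω => (X ω, Y ω)) (x, y) = pr p X x * pr p Y y

/-- A conditional pmf `w(u|x,y)`. -/
def CondPMF {X Y U : Type*} [Fintype U] (w : X → Y → U → ℝ) : Prop :=
  (∀ x y u, 0 ≤ w x y u) ∧ ∀ x y, ∑ u, w x y u = 1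

/-- The joint pmf `q(x,y) w(u|x,y)` on `X × Y × U`. -/
noncomputable def jointQ {X Y U : Type*} (q : X × Y → ℝ) (w : X → Y → U → ℝ) :
    X × Y × U → ℝ := fun ω => q (ω.1, ω.2.1) * w ω.1 ω.2.1 ω.2.2

/-- I(X;Y|U) under the joint pmf `q(x,y) w(u|x,y)`. -/
noncomputable def cmiXY {X Y U : Type*} [Fintype X] [DecidableEq X] [Fintype Y] [DecidableEq Y]
    [Fintype U] [DecidableEq U] (q : X × Y → ℝ) (w : X → Y → U → ℝ) : ℝ :=
  cmi (jointQ q w) (fun ω => ω.1) (fun ω => ω.2.1) (fun ω => ω.2.2)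

/-- I(X,Y;U) under the joint pmf `q(x,y) w(u|x,y)`. -/
noncomputable def miXYU {X Y U : Type*} [Fintype X] [DecidableEq X] [Fintype Y] [DecidableEq Y]
    [Fintype U] [DecidableEq U] (q : X × Y → ℝ) (w : X → Y → U → ℝ) : ℝ :=
  mi (jointQ q w) (fun ω => (ω.1, ω.2.1)) (fun ω => ω.2.2)


set_option linter.unusedSectionVars false
set_option linter.unusedVariables false

section Base
variable {Ω : Type*} [Fintype Ω] {α β γ : Type*} [Fintype α] [DecidableEq α]
  [Fintype β] [DecidableEq β] [Fintype γ] [DecidableEq γ] (p : Ω → ℝ)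

lemma pr_nonneg (hp : ∀ ω, 0 ≤ p ω) (Z : Ω → α) (z : α) : 0 ≤ pr p Z z :=
  Finset.sum_nonneg fun ω _ => hp ω

lemma pr_eq_sum_ite (Z : Ω → α) (z : α) :
    pr p Z z = ∑ ω, if Z ω = z then p ω else 0 := by
  rw [pr, Finset.sum_filter]

lemma sum_pr (Z : Ω → α) : ∑ z, pr p Z z = ∑ ω, p ω := by
  unfold pr; exact Finset.sum_fiberwise _ _ _

lemma pr_comp {φ : α → β} (hφ : Function.Injective φ) (Z : Ω → α) (z : α) :
    pr p (fun ω => φ (Z ω)) (φ z) = pr p Z z := by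
  unfold pr
  congr 1
  apply Finset.filter_congr
  intro ω _
  simp [hφ.eq_iff]

lemma sum_p_mul (Z : Ω → α) (f : α → ℝ) :
    ∑ ω, p ω * f (Z ω) = ∑ z, pr p Z z * f z := by
  unfold pr
  rw [← Finset.sum_fiberwise (Finset.univ) Z (fun ω => p ω * f (Z ω))]
  refine Finset.sum_congr rfl fun z _ => ?_
  rw [Finset.sum_mul]
  refine Finset.sum_congr rfl fun ω hω => ?_
  rw [(Finset.mem_filter.1 hω).2]

lemma ent_omega (Z : Ω → α) :
    ent p Z = -(∑ ω, p ω * Real.log (pr p Z (Z ω))) / Real.log 2 := by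
  rw [ent, sum_p_mul p Z (fun z => Real.log (pr p Z z)), neg_div, Finset.sum_div]
  congr 1
  exact Finset.sum_congr rfl fun z _ => by rw [Real.logb, mul_div_assoc]

lemma ent_comp {φ : α → β} (hφ : Function.Injective φ) (Z : Ω → α) :
    ent p (fun ω => φ (Z ω)) = ent p Z := by
  rw [ent_omega, ent_omega]
  congr 2
  exact Finset.sum_congr rfl fun ω _ => by rw [pr_comp p hφ]

lemma ent_congr {Ω' : Type*} [Fintype Ω'] {p' : Ω' → ℝ} {Z : Ω → α} {Z' : Ω' → α}
    (h : ∀ z, pr p Z z = pr p' Z' z) : ent p Z = ent p' Z' := by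
  unfold ent; congr 1; exact Finset.sum_congr rfl fun z _ => by rw [h]

lemma pr_marg (A : Ω → α) (C : Ω → γ) (c : γ) :
    ∑ a, pr p (fun ω => (A ω, C ω)) (a, c) = pr p C c := by
  unfold pr
  rw [← Finset.sum_fiberwise_of_maps_to (g := A) (t := Finset.univ)
    (fun ω _ => Finset.mem_univ _) p]
  refine Finset.sum_congr rfl fun a _ => ?_
  rw [Finset.filter_filter]
  congr 1
  apply Finset.filter_congr
  intro ω _
  simp [Prod.ext_iff, and_comm]

lemma pr_le (hp : ∀ ω, 0 ≤ p ω) {Z : Ω → α} {W : Ω → β} {z : α} {v : β}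
    (h : ∀ ω, Z ω = z → W ω = v) : pr p Z z ≤ pr p W v := by
  apply Finset.sum_le_sum_of_subset_of_nonneg
  · intro ω hω
    simp only [Finset.mem_filter, Finset.mem_univ, true_and] at *
    exact h ω hω
  · intro ω _ _; exact hp ω

end Base

noncomputable def klSum {ι : Type*} [Fintype ι] (a b : ι → ℝ) : ℝ :=
  ∑ i, a i * (Real.log (a i) - Real.log (b i))

lemma kl_term_ge {a b : ℝ} (ha : 0 ≤ a) (hb : 0 ≤ b) (h : b = 0 → a = 0) :
    a - b ≤ a * (Real.log a - Real.log b) := by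
  rcases eq_or_lt_of_le ha with h0 | ha'
  · simp [← h0]; linarith [hb]
  have hb' : 0 < b := by
    rcases eq_or_lt_of_le hb with h0 | h0
    · exact absurd (h h0.symm) (by linarith)
    · exact h0
  have key : Real.log (b / a) ≤ b / a - 1 := Real.log_le_sub_one_of_pos (by positivity)
  rw [Real.log_div (by positivity) (by positivity)] at key
  have := mul_le_mul_of_nonneg_left key (le_of_lt ha')
  have h2 : a * (b / a - 1) = b - a := by field_simp
  nlinarith [this]

lemma kl_nonneg {ι : Type*} [Fintype ι] {a b : ι → ℝ} (ha : ∀ i, 0 ≤ a i)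
    (hb : ∀ i, 0 ≤ b i) (h0 : ∀ i, b i = 0 → a i = 0) (hsum : ∑ i, b i ≤ ∑ i, a i) :
    0 ≤ klSum a b := by
  have : ∑ i, (a i - b i) ≤ klSum a b :=
    Finset.sum_le_sum fun i _ => kl_term_ge (ha i) (hb i) (h0 i)
  rw [Finset.sum_sub_distrib] at this
  linarith

lemma kl_term_convex {a1 a2 b1 b2 : ℝ} (ha1 : 0 ≤ a1) (ha2 : 0 ≤ a2) (hb1 : 0 ≤ b1)
    (hb2 : 0 ≤ b2) (h1 : b1 = 0 → a1 = 0) (h2 : b2 = 0 → a2 = 0) :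
    (a1 + a2) * (Real.log (a1 + a2) - Real.log (b1 + b2)) ≤
      a1 * (Real.log a1 - Real.log b1) + a2 * (Real.log a2 - Real.log b2) := by
  rcases eq_or_lt_of_le (add_nonneg hb1 hb2) with hb0 | hbpos
  · have e1 : b1 = 0 := by linarith
    have e2 : b2 = 0 := by linarith
    simp [h1 e1, h2 e2, e1, e2]
  by_cases ea1 : a1 = 0
  · subst ea1
    simp only [zero_add, zero_mul]
    by_cases ea2 : a2 = 0
    · simp [ea2]
    have ha2' : 0 < a2 := lt_of_le_of_ne ha2 (Ne.symm ea2)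
    have hb2' : 0 < b2 := by
      rcases eq_or_lt_of_le hb2 with h0 | h0
      · exact absurd (h2 h0.symm) ea2
      · exact h0
    have : Real.log b2 ≤ Real.log (b1 + b2) := Real.log_le_log hb2' (by linarith)
    nlinarith
  by_cases ea2 : a2 = 0
  · subst ea2
    simp only [add_zero, zero_mul]
    have ha1' : 0 < a1 := lt_of_le_of_ne ha1 (Ne.symm ea1)
    have hb1' : 0 < b1 := by
      rcases eq_or_lt_of_le hb1 with h0 | h0
      · exact absurd (h1 h0.symm) ea1
      · exact h0
    have : Real.log b1 ≤ Real.log (b1 + b2) := Real.log_le_log hb1' (by linarith)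
    nlinarith
  -- all positive
  have ha1' : 0 < a1 := lt_of_le_of_ne ha1 (Ne.symm ea1)
  have ha2' : 0 < a2 := lt_of_le_of_ne ha2 (Ne.symm ea2)
  have hb1' : 0 < b1 := by
    rcases eq_or_lt_of_le hb1 with h0 | h0
    · exact absurd (h1 h0.symm) ea1
    · exact h0
  have hb2' : 0 < b2 := by
    rcases eq_or_lt_of_le hb2 with h0 | h0
    · exact absurd (h2 h0.symm) ea2
    · exact h0
  have hapos : (0:ℝ) < a1 + a2 := by linarith
  have ineq1 : a1 * (b1 + b2) - b1 * (a1 + a2) ≤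
      (a1 * (b1 + b2)) * (Real.log (a1 * (b1 + b2)) - Real.log (b1 * (a1 + a2))) :=
    kl_term_ge (by positivity) (by positivity) (fun hz => absurd hz (by positivity))
  have ineq2 : a2 * (b1 + b2) - b2 * (a1 + a2) ≤
      (a2 * (b1 + b2)) * (Real.log (a2 * (b1 + b2)) - Real.log (b2 * (a1 + a2))) :=
    kl_term_ge (by positivity) (by positivity) (fun hz => absurd hz (by positivity))
  rw [Real.log_mul (by positivity) (by positivity),
      Real.log_mul (by positivity) (by positivity)] at ineq1
  rw [Real.log_mul (by positivity) (by positivity),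
      Real.log_mul (by positivity) (by positivity)] at ineq2
  have key : 0 ≤ (b1 + b2) * ((a1 * (Real.log a1 - Real.log b1) +
      a2 * (Real.log a2 - Real.log b2)) -
      (a1 + a2) * (Real.log (a1 + a2) - Real.log (b1 + b2))) := by nlinarith [ineq1, ineq2]
  have := (mul_nonneg_iff_of_pos_left hbpos).1 key
  linarith

lemma kl_scale {s a b : ℝ} (hs : 0 ≤ s) (ha : 0 ≤ a) (hb : 0 ≤ b) (h : b = 0 → a = 0) :
    (s * a) * (Real.log (s * a) - Real.log (s * b)) = s * (a * (Real.log a - Real.log b)) := by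
  rcases eq_or_lt_of_le hs with h0 | hs'
  · simp [← h0]
  rcases eq_or_lt_of_le ha with h0 | ha'
  · simp [← h0]
  have hb' : 0 < b := by
    rcases eq_or_lt_of_le hb with h0 | h0
    · exact absurd (h h0.symm) (by linarith)
    · exact h0
  rw [Real.log_mul (by positivity) (by positivity),
      Real.log_mul (by positivity) (by positivity)]
  ring

lemma kl_convex {ι : Type*} [Fintype ι] {a1 a2 b1 b2 : ι → ℝ} {s t : ℝ}
    (hs : 0 ≤ s) (ht : 0 ≤ t)
    (ha1 : ∀ i, 0 ≤ a1 i) (ha2 : ∀ i, 0 ≤ a2 i) (hb1 : ∀ i, 0 ≤ b1 i) (hb2 : ∀ i, 0 ≤ b2 i)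
    (h1 : ∀ i, b1 i = 0 → a1 i = 0) (h2 : ∀ i, b2 i = 0 → a2 i = 0) :
    klSum (fun i => s * a1 i + t * a2 i) (fun i => s * b1 i + t * b2 i) ≤
      s * klSum a1 b1 + t * klSum a2 b2 := by
  unfold klSum
  rw [Finset.mul_sum, Finset.mul_sum, ← Finset.sum_add_distrib]
  apply Finset.sum_le_sum
  intro i _
  have step := kl_term_convex (a1 := s * a1 i) (a2 := t * a2 i) (b1 := s * b1 i)
    (b2 := t * b2 i)
    (mul_nonneg hs (ha1 i)) (mul_nonneg ht (ha2 i))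
    (mul_nonneg hs (hb1 i)) (mul_nonneg ht (hb2 i))
    (fun hz => by rcases mul_eq_zero.1 hz with h | h
                  · simp [h]
                  · simp [h1 i h])
    (fun hz => by rcases mul_eq_zero.1 hz with h | h
                  · simp [h]
                  · simp [h2 i h])
  calc (s * a1 i + t * a2 i) * (Real.log (s * a1 i + t * a2 i) -
          Real.log (s * b1 i + t * b2 i))
      ≤ (s * a1 i) * (Real.log (s * a1 i) - Real.log (s * b1 i)) +
        (t * a2 i) * (Real.log (t * a2 i) - Real.log (t * b2 i)) := step
    _ = s * (a1 i * (Real.log (a1 i) - Real.log (b1 i))) +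
        t * (a2 i * (Real.log (a2 i) - Real.log (b2 i))) := by
        rw [kl_scale hs (ha1 i) (hb1 i) (h1 i), kl_scale ht (ha2 i) (hb2 i) (h2 i)]
section Rep
variable {Ω : Type*} [Fintype Ω] {α β γ : Type*} [Fintype α] [DecidableEq α]
  [Fintype β] [DecidableEq β] [Fintype γ] [DecidableEq γ] {p : Ω → ℝ}

lemma log2_pos : (0:ℝ) < Real.log 2 := Real.log_pos (by norm_num)

lemma mi_kl (hp : ∀ ω, 0 ≤ p ω) (A : Ω → α) (B : Ω → β) :
    mi p A B * Real.log 2 =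
      klSum (fun z : α × β => pr p (fun ω => (A ω, B ω)) z)
        (fun z : α × β => pr p A z.1 * pr p B z.2) := by
  have hl : Real.log 2 ≠ 0 := ne_of_gt log2_pos
  calc mi p A B * Real.log 2
      = ∑ ω, p ω * Real.log (pr p (fun ω' => (A ω', B ω')) (A ω, B ω))
          - ∑ ω, p ω * Real.log (pr p A (A ω)) - ∑ ω, p ω * Real.log (pr p B (B ω)) := by
        rw [mi, ent_omega p A, ent_omega p B, ent_omega p (fun ω => (A ω, B ω))]
        field_simp
        ring
    _ = ∑ ω, p ω * ((fun z : α × β => Real.log (pr p (fun ω' => (A ω', B ω')) z)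
          - Real.log (pr p A z.1) - Real.log (pr p B z.2)) (A ω, B ω)) := by
        rw [← Finset.sum_sub_distrib, ← Finset.sum_sub_distrib]
        exact Finset.sum_congr rfl fun ω _ => by ring
    _ = ∑ z : α × β, pr p (fun ω => (A ω, B ω)) z *
          (Real.log (pr p (fun ω' => (A ω', B ω')) z)
            - Real.log (pr p A z.1) - Real.log (pr p B z.2)) :=
        sum_p_mul p (fun ω => (A ω, B ω)) (fun z : α × β =>
          Real.log (pr p (fun ω' => (A ω', B ω')) z)
            - Real.log (pr p A z.1) - Real.log (pr p B z.2))
    _ = klSum (fun z : α × β => pr p (fun ω => (A ω, B ω)) z)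
        (fun z : α × β => pr p A z.1 * pr p B z.2) := by
        refine Finset.sum_congr rfl fun z _ => ?_
        by_cases hz : pr p (fun ω => (A ω, B ω)) z = 0
        · simp [hz]
        · have h3 : 0 < pr p (fun ω => (A ω, B ω)) z :=
            lt_of_le_of_ne (pr_nonneg p hp _ _) (Ne.symm hz)
          have hA : 0 < pr p A z.1 := lt_of_lt_of_le h3 (pr_le p hp (fun ω h => by
            simp [Prod.ext_iff] at h; tauto))
          have hB : 0 < pr p B z.2 := lt_of_lt_of_le h3 (pr_le p hp (fun ω h => by
            simp [Prod.ext_iff] at h; tauto))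
          rw [Real.log_mul (ne_of_gt hA) (ne_of_gt hB)]
          ring

lemma cmi_kl (hp : ∀ ω, 0 ≤ p ω) (A : Ω → α) (B : Ω → β) (C : Ω → γ) :
    cmi p A B C * Real.log 2 =
      klSum (fun z : α × β × γ => pr p (fun ω => (A ω, B ω, C ω)) z)
        (fun z : α × β × γ => pr p (fun ω => (A ω, C ω)) (z.1, z.2.2) *
          pr p (fun ω => (B ω, C ω)) (z.2.1, z.2.2) / pr p C z.2.2) := by
  have hl : Real.log 2 ≠ 0 := ne_of_gt log2_pos
  have hφ : Function.Injective (fun t : α × β × γ => ((t.1, t.2.1), t.2.2)) := by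
    intro a b h
    simp only [Prod.mk.injEq] at h
    simp [Prod.ext_iff]
    tauto
  have hrw : ∀ ω, pr p (fun ω' => ((A ω', B ω'), C ω')) ((A ω, B ω), C ω) =
      pr p (fun ω' => (A ω', B ω', C ω')) (A ω, B ω, C ω) := by
    intro ω
    have := pr_comp p hφ (fun ω' => (A ω', B ω', C ω')) (A ω, B ω, C ω)
    simpa using this
  calc cmi p A B C * Real.log 2
      = ∑ ω, p ω * Real.log (pr p (fun ω' => ((A ω', B ω'), C ω')) ((A ω, B ω), C ω))
          + ∑ ω, p ω * Real.log (pr p C (C ω))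
          - ∑ ω, p ω * Real.log (pr p (fun ω' => (A ω', C ω')) (A ω, C ω))
          - ∑ ω, p ω * Real.log (pr p (fun ω' => (B ω', C ω')) (B ω, C ω)) := by
        rw [cmi, centH, centH, centH, ent_omega p C, ent_omega p (fun ω => (A ω, C ω)),
          ent_omega p (fun ω => (B ω, C ω)), ent_omega p (fun ω => ((A ω, B ω), C ω))]
        field_simp
        ring
    _ = ∑ ω, p ω * ((fun z : α × β × γ =>
          Real.log (pr p (fun ω' => (A ω', B ω', C ω')) z) + Real.log (pr p C z.2.2)
          - Real.log (pr p (fun ω' => (A ω', C ω')) (z.1, z.2.2))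
          - Real.log (pr p (fun ω' => (B ω', C ω')) (z.2.1, z.2.2))) (A ω, B ω, C ω)) := by
        rw [← Finset.sum_add_distrib, ← Finset.sum_sub_distrib, ← Finset.sum_sub_distrib]
        refine Finset.sum_congr rfl fun ω _ => ?_
        rw [hrw ω]
        ring
    _ = ∑ z : α × β × γ, pr p (fun ω => (A ω, B ω, C ω)) z *
          (Real.log (pr p (fun ω' => (A ω', B ω', C ω')) z) + Real.log (pr p C z.2.2)
          - Real.log (pr p (fun ω' => (A ω', C ω')) (z.1, z.2.2))
          - Real.log (pr p (fun ω' => (B ω', C ω')) (z.2.1, z.2.2))) :=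
        sum_p_mul p (fun ω => (A ω, B ω, C ω)) (fun z : α × β × γ =>
          Real.log (pr p (fun ω' => (A ω', B ω', C ω')) z) + Real.log (pr p C z.2.2)
          - Real.log (pr p (fun ω' => (A ω', C ω')) (z.1, z.2.2))
          - Real.log (pr p (fun ω' => (B ω', C ω')) (z.2.1, z.2.2)))
    _ = klSum (fun z : α × β × γ => pr p (fun ω => (A ω, B ω, C ω)) z)
        (fun z : α × β × γ => pr p (fun ω => (A ω, C ω)) (z.1, z.2.2) *
          pr p (fun ω => (B ω, C ω)) (z.2.1, z.2.2) / pr p C z.2.2) := by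
        refine Finset.sum_congr rfl fun z _ => ?_
        by_cases hz : pr p (fun ω => (A ω, B ω, C ω)) z = 0
        · simp [hz]
        · have h3 : 0 < pr p (fun ω => (A ω, B ω, C ω)) z :=
            lt_of_le_of_ne (pr_nonneg p hp _ _) (Ne.symm hz)
          have hAC : 0 < pr p (fun ω => (A ω, C ω)) (z.1, z.2.2) :=
            lt_of_lt_of_le h3 (pr_le p hp (fun ω h => by
              simp [Prod.ext_iff] at h ⊢; tauto))
          have hBC : 0 < pr p (fun ω => (B ω, C ω)) (z.2.1, z.2.2) :=
            lt_of_lt_of_le h3 (pr_le p hp (fun ω h => by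
              simp [Prod.ext_iff] at h ⊢; tauto))
          have hC : 0 < pr p C z.2.2 :=
            lt_of_lt_of_le h3 (pr_le p hp (fun ω h => by
              simp [Prod.ext_iff] at h; tauto))
          rw [Real.log_div (by positivity) (ne_of_gt hC),
            Real.log_mul (ne_of_gt hAC) (ne_of_gt hBC)]
          ring
end Rep
section Cons
variable {Ω : Type*} [Fintype Ω] {α β γ : Type*} [Fintype α] [DecidableEq α]
  [Fintype β] [DecidableEq β] [Fintype γ] [DecidableEq γ] {p : Ω → ℝ}

lemma sum_reorder3 (f : α × β × γ → ℝ) :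
    ∑ z : α × β × γ, f z = ∑ c, ∑ a, ∑ b, f (a, b, c) := by
  calc ∑ z : α × β × γ, f z = ∑ a, ∑ b, ∑ c, f (a, b, c) := by
        rw [Fintype.sum_prod_type]; simp_rw [Fintype.sum_prod_type]
    _ = ∑ a, ∑ c, ∑ b, f (a, b, c) := Finset.sum_congr rfl (fun a _ => Finset.sum_comm)
    _ = ∑ c, ∑ a, ∑ b, f (a, b, c) := Finset.sum_comm

lemma cmi_b_zero (hp : ∀ ω, 0 ≤ p ω) (A : Ω → α) (B : Ω → β) (C : Ω → γ)
    (z : α × β × γ)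
    (h : pr p (fun ω => (A ω, C ω)) (z.1, z.2.2) *
          pr p (fun ω => (B ω, C ω)) (z.2.1, z.2.2) / pr p C z.2.2 = 0) :
    pr p (fun ω => (A ω, B ω, C ω)) z = 0 := by
  have hle1 : pr p (fun ω => (A ω, B ω, C ω)) z ≤ pr p (fun ω => (A ω, C ω)) (z.1, z.2.2) :=
    pr_le p hp (fun ω h' => by simp [Prod.ext_iff] at h' ⊢; tauto)
  have hle2 : pr p (fun ω => (A ω, B ω, C ω)) z ≤ pr p (fun ω => (B ω, C ω)) (z.2.1, z.2.2) :=
    pr_le p hp (fun ω h' => by simp [Prod.ext_iff] at h' ⊢; tauto)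
  have hle3 : pr p (fun ω => (A ω, B ω, C ω)) z ≤ pr p C z.2.2 :=
    pr_le p hp (fun ω h' => by simp [Prod.ext_iff] at h'; tauto)
  have hnn := pr_nonneg p hp (fun ω => (A ω, B ω, C ω)) z
  rcases div_eq_zero_iff.1 h with h' | h'
  · rcases mul_eq_zero.1 h' with h'' | h''
    · exact le_antisymm (h'' ▸ hle1) hnn
    · exact le_antisymm (h'' ▸ hle2) hnn
  · exact le_antisymm (h' ▸ hle3) hnn

lemma cmi_b_sum (hp : ∀ ω, 0 ≤ p ω) (A : Ω → α) (B : Ω → β) (C : Ω → γ) :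
    ∑ z : α × β × γ, pr p (fun ω => (A ω, C ω)) (z.1, z.2.2) *
        pr p (fun ω => (B ω, C ω)) (z.2.1, z.2.2) / pr p C z.2.2 ≤ ∑ ω, p ω := by
  rw [sum_reorder3 (fun z => pr p (fun ω => (A ω, C ω)) (z.1, z.2.2) *
        pr p (fun ω => (B ω, C ω)) (z.2.1, z.2.2) / pr p C z.2.2)]
  have step : ∀ c, ∑ a, ∑ b, pr p (fun ω => (A ω, C ω)) (a, c) *
      pr p (fun ω => (B ω, C ω)) (b, c) / pr p C c
      = pr p C c * pr p C c / pr p C c := by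
    intro c
    have inner : ∀ a, ∑ b, pr p (fun ω => (A ω, C ω)) (a, c) *
        pr p (fun ω => (B ω, C ω)) (b, c) / pr p C c
        = pr p (fun ω => (A ω, C ω)) (a, c) * pr p C c / pr p C c := by
      intro a
      rw [← Finset.sum_div, ← Finset.mul_sum, pr_marg p B C c]
    simp_rw [inner]
    rw [← Finset.sum_div, ← Finset.sum_mul, pr_marg p A C c]
  simp_rw [step]
  have : ∀ c, pr p C c * pr p C c / pr p C c ≤ pr p C c := by
    intro c
    by_cases hc : pr p C c = 0
    · simp [hc]
    · rw [mul_div_assoc, div_self hc, mul_one]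
  calc ∑ c, pr p C c * pr p C c / pr p C c ≤ ∑ c, pr p C c :=
        Finset.sum_le_sum (fun c _ => this c)
    _ = ∑ ω, p ω := sum_pr p C

lemma cmi_nonneg (hp : ∀ ω, 0 ≤ p ω) (A : Ω → α) (B : Ω → β) (C : Ω → γ) :
    0 ≤ cmi p A B C := by
  have h := kl_nonneg (a := fun z : α × β × γ => pr p (fun ω => (A ω, B ω, C ω)) z)
    (b := fun z : α × β × γ => pr p (fun ω => (A ω, C ω)) (z.1, z.2.2) *
      pr p (fun ω => (B ω, C ω)) (z.2.1, z.2.2) / pr p C z.2.2)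
    (fun z => pr_nonneg p hp _ _)
    (fun z => div_nonneg (mul_nonneg (pr_nonneg p hp _ _) (pr_nonneg p hp _ _))
      (pr_nonneg p hp _ _))
    (fun z => cmi_b_zero hp A B C z)
    (by rw [sum_pr p (fun ω => (A ω, B ω, C ω))]; exact cmi_b_sum hp A B C)
  rw [← cmi_kl hp A B C] at h
  exact (mul_nonneg_iff_of_pos_right log2_pos).1 h

lemma mi_nonneg (hp : ∀ ω, 0 ≤ p ω) (hs : ∑ ω, p ω = 1) (A : Ω → α) (B : Ω → β) :
    0 ≤ mi p A B := by
  have h := kl_nonneg (a := fun z : α × β => pr p (fun ω => (A ω, B ω)) z)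
    (b := fun z : α × β => pr p A z.1 * pr p B z.2)
    (fun z => pr_nonneg p hp _ _)
    (fun z => mul_nonneg (pr_nonneg p hp _ _) (pr_nonneg p hp _ _))
    (fun z hz => by
      have hle1 : pr p (fun ω => (A ω, B ω)) z ≤ pr p A z.1 :=
        pr_le p hp (fun ω h' => by simp [Prod.ext_iff] at h'; tauto)
      have hle2 : pr p (fun ω => (A ω, B ω)) z ≤ pr p B z.2 :=
        pr_le p hp (fun ω h' => by simp [Prod.ext_iff] at h'; tauto)
      have hnn := pr_nonneg p hp (fun ω => (A ω, B ω)) z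
      rcases mul_eq_zero.1 hz with h' | h'
      · exact le_antisymm (h' ▸ hle1) hnn
      · exact le_antisymm (h' ▸ hle2) hnn)
    (by
      rw [sum_pr p (fun ω => (A ω, B ω)), hs]
      rw [Fintype.sum_prod_type]
      have : ∀ a, ∑ b, pr p A a * pr p B b = pr p A a := by
        intro a
        rw [← Finset.mul_sum, sum_pr p B, hs, mul_one]
      simp_rw [this]
      rw [sum_pr p A, hs])
  rw [← mi_kl hp A B] at h
  exact (mul_nonneg_iff_of_pos_right log2_pos).1 h

lemma pr_linear (p0 p1 : Ω → ℝ) (s t : ℝ) (Z : Ω → α) (z : α) :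
    pr (fun ω => s * p1 ω + t * p0 ω) Z z = s * pr p1 Z z + t * pr p0 Z z := by
  unfold pr
  rw [Finset.mul_sum, Finset.mul_sum, ← Finset.sum_add_distrib]

lemma cmi_mix_le {p0 p1 : Ω → ℝ} (hp0 : ∀ ω, 0 ≤ p0 ω) (hp1 : ∀ ω, 0 ≤ p1 ω)
    {s t : ℝ} (hs : 0 ≤ s) (ht : 0 ≤ t) (hst : s + t = 1)
    (A : Ω → α) (B : Ω → β) (C : Ω → γ)
    (hmarg : ∀ z : β × γ, pr p0 (fun ω => (B ω, C ω)) z = pr p1 (fun ω => (B ω, C ω)) z) :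
    cmi (fun ω => s * p1 ω + t * p0 ω) A B C ≤ s * cmi p1 A B C + t * cmi p0 A B C := by
  set P := fun ω => s * p1 ω + t * p0 ω with hP
  have hPn : ∀ ω, 0 ≤ P ω := fun ω =>
    add_nonneg (mul_nonneg hs (hp1 ω)) (mul_nonneg ht (hp0 ω))
  have hmargC : ∀ c, pr p0 C c = pr p1 C c := by
    intro c
    rw [← pr_marg p0 B C c, ← pr_marg p1 B C c]
    exact Finset.sum_congr rfl fun b _ => hmarg (b, c)
  -- kl pieces
  have key : cmi P A B C * Real.log 2 ≤
      (s * cmi p1 A B C + t * cmi p0 A B C) * Real.log 2 := by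
    rw [cmi_kl hPn A B C]
    have hb1 : ∀ z : α × β × γ, pr P (fun ω => (A ω, B ω, C ω)) z =
        s * pr p1 (fun ω => (A ω, B ω, C ω)) z + t * pr p0 (fun ω => (A ω, B ω, C ω)) z :=
      fun z => pr_linear p0 p1 s t _ z
    have hBC : ∀ z : β × γ, pr P (fun ω => (B ω, C ω)) z = pr p1 (fun ω => (B ω, C ω)) z := by
      intro z
      rw [pr_linear p0 p1 s t, hmarg z]
      linear_combination pr p1 (fun ω => (B ω, C ω)) z * hst
    have hC : ∀ c, pr P C c = pr p1 C c := by
      intro c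
      rw [pr_linear p0 p1 s t, hmargC c]
      linear_combination pr p1 C c * hst
    have hbfun : ∀ z : α × β × γ,
        pr P (fun ω => (A ω, C ω)) (z.1, z.2.2) *
          pr P (fun ω => (B ω, C ω)) (z.2.1, z.2.2) / pr P C z.2.2 =
        s * (pr p1 (fun ω => (A ω, C ω)) (z.1, z.2.2) *
          pr p1 (fun ω => (B ω, C ω)) (z.2.1, z.2.2) / pr p1 C z.2.2) +
        t * (pr p0 (fun ω => (A ω, C ω)) (z.1, z.2.2) *
          pr p0 (fun ω => (B ω, C ω)) (z.2.1, z.2.2) / pr p0 C z.2.2) := by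
      intro z
      rw [pr_linear p0 p1 s t (fun ω => (A ω, C ω)), hBC (z.2.1, z.2.2), hC z.2.2,
        hmarg (z.2.1, z.2.2), hmargC z.2.2]
      ring
    have ha : klSum (fun z : α × β × γ => pr P (fun ω => (A ω, B ω, C ω)) z)
        (fun z : α × β × γ => pr P (fun ω => (A ω, C ω)) (z.1, z.2.2) *
          pr P (fun ω => (B ω, C ω)) (z.2.1, z.2.2) / pr P C z.2.2) =
        klSum (fun z : α × β × γ =>
            s * pr p1 (fun ω => (A ω, B ω, C ω)) z + t * pr p0 (fun ω => (A ω, B ω, C ω)) z)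
          (fun z : α × β × γ =>
            s * (pr p1 (fun ω => (A ω, C ω)) (z.1, z.2.2) *
              pr p1 (fun ω => (B ω, C ω)) (z.2.1, z.2.2) / pr p1 C z.2.2) +
            t * (pr p0 (fun ω => (A ω, C ω)) (z.1, z.2.2) *
              pr p0 (fun ω => (B ω, C ω)) (z.2.1, z.2.2) / pr p0 C z.2.2)) := by
      unfold klSum
      refine Finset.sum_congr rfl fun z _ => ?_
      simp only []
      rw [hb1 z, hbfun z]
    rw [ha]
    have hconv := kl_convex (s := s) (t := t) hs ht
      (a1 := fun z : α × β × γ => pr p1 (fun ω => (A ω, B ω, C ω)) z)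
      (a2 := fun z : α × β × γ => pr p0 (fun ω => (A ω, B ω, C ω)) z)
      (b1 := fun z : α × β × γ => pr p1 (fun ω => (A ω, C ω)) (z.1, z.2.2) *
          pr p1 (fun ω => (B ω, C ω)) (z.2.1, z.2.2) / pr p1 C z.2.2)
      (b2 := fun z : α × β × γ => pr p0 (fun ω => (A ω, C ω)) (z.1, z.2.2) *
          pr p0 (fun ω => (B ω, C ω)) (z.2.1, z.2.2) / pr p0 C z.2.2)
      (fun z => pr_nonneg p1 hp1 _ _) (fun z => pr_nonneg p0 hp0 _ _)
      (fun z => div_nonneg (mul_nonneg (pr_nonneg p1 hp1 _ _) (pr_nonneg p1 hp1 _ _))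
        (pr_nonneg p1 hp1 _ _))
      (fun z => div_nonneg (mul_nonneg (pr_nonneg p0 hp0 _ _) (pr_nonneg p0 hp0 _ _))
        (pr_nonneg p0 hp0 _ _))
      (fun z => cmi_b_zero hp1 A B C z) (fun z => cmi_b_zero hp0 A B C z)
    calc klSum _ _ ≤ s * klSum _ _ + t * klSum _ _ := hconv
      _ = (s * cmi p1 A B C + t * cmi p0 A B C) * Real.log 2 := by
        rw [← cmi_kl hp1 A B C, ← cmi_kl hp0 A B C]
        ring
  exact le_of_mul_le_mul_right key log2_pos
end Cons
section Book1
variable {X Y U : Type*} [Fintype X] [DecidableEq X] [Fintype Y] [DecidableEq Y]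
  [Fintype U] [DecidableEq U]

lemma pr_jointQ_X (q : X × Y → ℝ) {w : X → Y → U → ℝ} (hw : ∀ x y, ∑ u, w x y u = 1)
    (x : X) : pr (jointQ q w) (fun ω => ω.1) x = pr q Prod.fst x := by
  rw [pr_eq_sum_ite, pr_eq_sum_ite]
  rw [Fintype.sum_prod_type, Fintype.sum_prod_type]
  simp_rw [Fintype.sum_prod_type]
  refine Finset.sum_congr rfl fun x1 _ => Finset.sum_congr rfl fun y1 _ => ?_
  split_ifs with h
  · show (∑ u, q (x1, y1) * w x1 y1 u) = q (x1, y1)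
    rw [← Finset.mul_sum, hw, mul_one]
  · simp

lemma pr_jointQ_Y (q : X × Y → ℝ) {w : X → Y → U → ℝ} (hw : ∀ x y, ∑ u, w x y u = 1)
    (y : Y) : pr (jointQ q w) (fun ω => ω.2.1) y = pr q Prod.snd y := by
  rw [pr_eq_sum_ite, pr_eq_sum_ite]
  rw [Fintype.sum_prod_type, Fintype.sum_prod_type]
  simp_rw [Fintype.sum_prod_type]
  refine Finset.sum_congr rfl fun x1 _ => Finset.sum_congr rfl fun y1 _ => ?_
  split_ifs with h
  · show (∑ u, q (x1, y1) * w x1 y1 u) = q (x1, y1)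
    rw [← Finset.mul_sum, hw, mul_one]
  · simp

lemma pr_jointQ_XY (q : X × Y → ℝ) {w : X → Y → U → ℝ} (hw : ∀ x y, ∑ u, w x y u = 1)
    (x : X) (y : Y) :
    pr (jointQ q w) (fun ω => (ω.1, ω.2.1)) (x, y) = q (x, y) := by
  rw [pr_eq_sum_ite]
  rw [Fintype.sum_prod_type]
  simp_rw [Fintype.sum_prod_type]
  have step : ∀ x1 y1, (∑ u : U, if ((x1, y1) : X × Y) = (x, y) then jointQ q w (x1, y1, u) else 0)
      = if (x1, y1) = (x, y) then q (x1, y1) else 0 := by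
    intro x1 y1
    split_ifs with h
    · show (∑ u, q (x1, y1) * w x1 y1 u) = q (x1, y1)
      rw [← Finset.mul_sum, hw, mul_one]
    · simp
  simp_rw [step]
  simp [Prod.ext_iff, ite_and, Finset.sum_ite_eq']

lemma pr_q_id (q : X × Y → ℝ) (z : X × Y) : pr q (fun v => (v.1, v.2)) z = q z := by
  rw [pr_eq_sum_ite]
  simp
end Book1
section Book2
variable {X Y U : Type*} [Fintype X] [DecidableEq X] [Fintype Y] [DecidableEq Y]
  [Fintype U] [DecidableEq U]

lemma ent_jointQ_XY (q : X × Y → ℝ) {w : X → Y → U → ℝ} (hw : ∀ x y, ∑ u, w x y u = 1) :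
    ent (jointQ q w) (fun ω => (ω.1, ω.2.1)) = ent q (fun v => (v.1, v.2)) :=
  ent_congr (jointQ q w) fun z => by
    rw [show z = (z.1, z.2) from rfl, pr_jointQ_XY q hw, pr_q_id]

lemma ent_jointQ_X (q : X × Y → ℝ) {w : X → Y → U → ℝ} (hw : ∀ x y, ∑ u, w x y u = 1) :
    ent (jointQ q w) (fun ω => ω.1) = ent q Prod.fst :=
  ent_congr (jointQ q w) fun x => pr_jointQ_X q hw x

lemma ent_jointQ_Y (q : X × Y → ℝ) {w : X → Y → U → ℝ} (hw : ∀ x y, ∑ u, w x y u = 1) :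
    ent (jointQ q w) (fun ω => ω.2.1) = ent q Prod.snd :=
  ent_congr (jointQ q w) fun y => pr_jointQ_Y q hw y

variable (p : X × Y × U → ℝ)

lemma ent_g1 : ent p (fun ω => ((ω.1, ω.2.1), ω.2.2)) = ent p (fun ω => ω) :=
  ent_comp p (φ := fun t : X × Y × U => ((t.1, t.2.1), t.2.2))
    (fun a b h => by simp only [Prod.mk.injEq] at h; simp [Prod.ext_iff]; tauto) (fun ω => ω)

lemma ent_g2 : ent p (fun ω => ((ω.2.2, ω.2.1), ω.1)) = ent p (fun ω => ω) :=
  ent_comp p (φ := fun t : X × Y × U => ((t.2.2, t.2.1), t.1))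
    (fun a b h => by simp only [Prod.mk.injEq] at h; simp [Prod.ext_iff]; tauto) (fun ω => ω)

lemma ent_g3 : ent p (fun ω => ((ω.2.2, ω.1), ω.2.1)) = ent p (fun ω => ω) :=
  ent_comp p (φ := fun t : X × Y × U => ((t.2.2, t.1), t.2.1))
    (fun a b h => by simp only [Prod.mk.injEq] at h; simp [Prod.ext_iff]; tauto) (fun ω => ω)

lemma ent_s1 : ent p (fun ω => (ω.2.2, ω.1)) = ent p (fun ω => (ω.1, ω.2.2)) :=
  ent_comp p (φ := fun t : X × U => (t.2, t.1))
    (fun a b h => by simpa [Prod.ext_iff, and_comm] using h) (fun ω => (ω.1, ω.2.2))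

lemma ent_s2 : ent p (fun ω => (ω.2.2, ω.2.1)) = ent p (fun ω => (ω.2.1, ω.2.2)) :=
  ent_comp p (φ := fun t : Y × U => (t.2, t.1))
    (fun a b h => by simpa [Prod.ext_iff, and_comm] using h) (fun ω => (ω.2.1, ω.2.2))

lemma ent_s3 : ent p (fun ω => (ω.2.1, ω.1)) = ent p (fun ω => (ω.1, ω.2.1)) :=
  ent_comp p (φ := fun t : X × Y => (t.2, t.1))
    (fun a b h => by simpa [Prod.ext_iff, and_comm] using h) (fun ω => (ω.1, ω.2.1))

end Book2
section Ident
variable {X Y U : Type*} [Fintype X] [DecidableEq X] [Fintype Y] [DecidableEq Y]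
  [Fintype U] [DecidableEq U]

lemma identity1 (q : X × Y → ℝ) (w : X → Y → U → ℝ) (hw : ∀ x y, ∑ u, w x y u = 1) :
    cmiXY q w + miXYU q w = mi q Prod.fst Prod.snd
      + cmi (jointQ q w) (fun ω => ω.2.2) (fun ω => ω.2.1) (fun ω => ω.1)
      + cmi (jointQ q w) (fun ω => ω.2.2) (fun ω => ω.1) (fun ω => ω.2.1) := by
  simp only [cmiXY, miXYU, cmi, centH, mi]
  rw [ent_g1, ent_g2, ent_g3, ent_s1, ent_s2, ent_s3, ent_jointQ_XY q hw,
    ent_jointQ_X q hw, ent_jointQ_Y q hw]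
  ring

lemma identity2 (q : X × Y → ℝ) (w : X → Y → U → ℝ) (hw : ∀ x y, ∑ u, w x y u = 1) :
    cmiXY q w - miXYU q w = mi q Prod.fst Prod.snd
      - mi (jointQ q w) (fun ω => ω.1) (fun ω => ω.2.2)
      - mi (jointQ q w) (fun ω => ω.2.1) (fun ω => ω.2.2) := by
  simp only [cmiXY, miXYU, cmi, centH, mi]
  rw [ent_g1, ent_jointQ_XY q hw, ent_jointQ_X q hw, ent_jointQ_Y q hw]
  ring
end Ident
section Dirac
variable {X Y U : Type*} [Fintype X] [DecidableEq X] [Fintype Y] [DecidableEq Y]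
  [Fintype U] [DecidableEq U]

lemma dpr_pair {α : Type*} [Fintype α] [DecidableEq α] (q : X × Y → ℝ) (u0 : U)
    (f : X × Y → α) (a : α) (u : U) :
    pr (jointQ q (fun _ _ u' => if u' = u0 then (1:ℝ) else 0))
      (fun ω => (f (ω.1, ω.2.1), ω.2.2)) (a, u) = if u = u0 then pr q f a else 0 := by
  rw [pr_eq_sum_ite]
  rw [Fintype.sum_prod_type]
  simp_rw [Fintype.sum_prod_type]
  have step : ∀ x1 y1, (∑ u' : U, if ((f (x1, y1), u') : α × U) = (a, u) then
      jointQ q (fun _ _ u'' => if u'' = u0 then (1:ℝ) else 0) (x1, y1, u') else 0)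
      = if f (x1, y1) = a then (if u = u0 then q (x1, y1) else 0) else 0 := by
    intro x1 y1
    simp only [Prod.mk.injEq, ite_and, jointQ, mul_ite, mul_one, mul_zero]
    rcases eq_or_ne (f (x1, y1)) a with h | h
    · simp only [h, if_true, eq_self_iff_true]
      rw [Finset.sum_ite_eq' Finset.univ u (fun u' => if u' = u0 then q (x1, y1) else 0)]
      simp
    · simp [h]
  simp_rw [step]
  rw [pr_eq_sum_ite, Fintype.sum_prod_type]
  split_ifs with h
  · rfl
  · simp

lemma ent_dirac_pair {Ω α γ : Type*} [Fintype Ω] [Fintype α] [DecidableEq α]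
    [Fintype γ] [DecidableEq γ] {p : Ω → ℝ} {Z : Ω → α × γ} {c : γ} {r : α → ℝ}
    (h : ∀ a u, pr p Z (a, u) = if u = c then r a else 0) :
    ent p Z = -∑ a, r a * Real.logb 2 (r a) := by
  rw [ent, Fintype.sum_prod_type]
  congr 1
  refine Finset.sum_congr rfl fun a _ => ?_
  have : ∀ u : γ, pr p Z (a, u) * Real.logb 2 (pr p Z (a, u)) =
      if u = c then r a * Real.logb 2 (r a) else 0 := by
    intro u
    rw [h a u]
    split_ifs <;> simp
  simp_rw [this]
  rw [Finset.sum_ite_eq' Finset.univ c (fun _ => r a * Real.logb 2 (r a))]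
  simp

lemma pr_dirac_U (q : X × Y → ℝ) (u0 : U) (u : U) :
    pr (jointQ q (fun _ _ u' => if u' = u0 then (1:ℝ) else 0)) (fun ω => ω.2.2) u
      = if u = u0 then ∑ z, q z else 0 := by
  rw [pr_eq_sum_ite]
  rw [Fintype.sum_prod_type]
  simp_rw [Fintype.sum_prod_type]
  have step : ∀ x1 y1, (∑ u' : U, if u' = u then
      jointQ q (fun _ _ u'' => if u'' = u0 then (1:ℝ) else 0) (x1, y1, u') else 0)
      = if u = u0 then q (x1, y1) else 0 := by
    intro x1 y1
    simp only [jointQ, mul_ite, mul_one, mul_zero]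
    rw [Finset.sum_ite_eq' Finset.univ u (fun u' => if u' = u0 then q (x1, y1) else 0)]
    simp
  simp_rw [step]
  split_ifs with h
  · rfl
  · simp

lemma ent_dirac_U (q : X × Y → ℝ) (hq1 : ∑ z, q z = 1) (u0 : U) :
    ent (jointQ q (fun _ _ u' => if u' = u0 then (1:ℝ) else 0)) (fun ω => ω.2.2) = 0 := by
  rw [ent]
  have : ∀ u : U, pr (jointQ q (fun _ _ u' => if u' = u0 then (1:ℝ) else 0))
      (fun ω => ω.2.2) u * Real.logb 2 (pr (jointQ q (fun _ _ u' =>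
        if u' = u0 then (1:ℝ) else 0)) (fun ω => ω.2.2) u) = 0 := by
    intro u
    rw [pr_dirac_U q u0 u, hq1]
    split_ifs <;> simp
  simp_rw [this]
  simp

lemma dirac_cond (u0 : U) : ∀ (_ : X) (_ : Y), ∑ u : U, (if u = u0 then (1:ℝ) else 0) = 1 := by
  intro x y
  rw [Finset.sum_ite_eq' Finset.univ u0 (fun _ => (1:ℝ))]
  simp
end Dirac
section Dirac2
variable {X Y U : Type*} [Fintype X] [DecidableEq X] [Fintype Y] [DecidableEq Y]
  [Fintype U] [DecidableEq U] (q : X × Y → ℝ) (u0 : U)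

lemma ent_dirac_id :
    ent (jointQ q (fun _ _ u' => if u' = u0 then (1:ℝ) else 0)) (fun ω => ω)
      = ent q (fun v => (v.1, v.2)) := by
  rw [← ent_g1 (jointQ q (fun _ _ u' => if u' = u0 then (1:ℝ) else 0))]
  exact ent_dirac_pair (c := u0) (r := pr q (fun v => (v.1, v.2)))
    (fun a u => dpr_pair q u0 (fun v => (v.1, v.2)) a u)

lemma ent_dirac_XU :
    ent (jointQ q (fun _ _ u' => if u' = u0 then (1:ℝ) else 0)) (fun ω => (ω.1, ω.2.2))
      = ent q Prod.fst :=
  ent_dirac_pair (c := u0) (r := pr q Prod.fst) (fun a u => dpr_pair q u0 Prod.fst a u)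

lemma ent_dirac_YU :
    ent (jointQ q (fun _ _ u' => if u' = u0 then (1:ℝ) else 0)) (fun ω => (ω.2.1, ω.2.2))
      = ent q Prod.snd :=
  ent_dirac_pair (c := u0) (r := pr q Prod.snd) (fun a u => dpr_pair q u0 Prod.snd a u)

lemma miXYU_dirac (hq1 : ∑ z, q z = 1) :
    miXYU q (fun _ _ u' => if u' = u0 then (1:ℝ) else 0) = 0 := by
  rw [miXYU, mi]
  rw [ent_jointQ_XY q (dirac_cond u0), ent_dirac_U q hq1 u0]
  have h3 : ent (jointQ q (fun _ _ u' => if u' = u0 then (1:ℝ) else 0))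
      (fun ω => ((ω.1, ω.2.1), ω.2.2)) = ent q (fun v => (v.1, v.2)) := by
    rw [ent_g1 (jointQ q (fun _ _ u' => if u' = u0 then (1:ℝ) else 0))]
    exact ent_dirac_id q u0
  rw [h3]
  ring

lemma cmi_dirac_YX :
    cmi (jointQ q (fun _ _ u' => if u' = u0 then (1:ℝ) else 0))
      (fun ω => ω.2.2) (fun ω => ω.2.1) (fun ω => ω.1) = 0 := by
  simp only [cmi, centH]
  rw [ent_s1 (jointQ q (fun _ _ u' => if u' = u0 then (1:ℝ) else 0)),
    ent_s3 (jointQ q (fun _ _ u' => if u' = u0 then (1:ℝ) else 0)),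
    ent_g2 (jointQ q (fun _ _ u' => if u' = u0 then (1:ℝ) else 0)),
    ent_dirac_XU q u0, ent_dirac_id q u0,
    ent_jointQ_X q (dirac_cond u0), ent_jointQ_XY q (dirac_cond u0)]
  ring

lemma cmi_dirac_XY :
    cmi (jointQ q (fun _ _ u' => if u' = u0 then (1:ℝ) else 0))
      (fun ω => ω.2.2) (fun ω => ω.1) (fun ω => ω.2.1) = 0 := by
  simp only [cmi, centH]
  rw [ent_s2 (jointQ q (fun _ _ u' => if u' = u0 then (1:ℝ) else 0)),
    ent_g3 (jointQ q (fun _ _ u' => if u' = u0 then (1:ℝ) else 0)),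
    ent_dirac_YU q u0, ent_dirac_id q u0,
    ent_jointQ_Y q (dirac_cond u0), ent_jointQ_XY q (dirac_cond u0)]
  ring

lemma cmiXY_dirac (hq1 : ∑ z, q z = 1) :
    cmiXY q (fun _ _ u' => if u' = u0 then (1:ℝ) else 0) = mi q Prod.fst Prod.snd := by
  have h1 := identity1 q (fun _ _ u' => if u' = u0 then (1:ℝ) else 0) (dirac_cond u0)
  rw [miXYU_dirac q u0 hq1, cmi_dirac_YX q u0, cmi_dirac_XY q u0] at h1
  linarith
end Dirac2
section Cont
variable {Ω : Type*} [Fintype Ω] {α : Type*} [Fintype α] [DecidableEq α]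

lemma ent_cont {P : ℝ → Ω → ℝ} (h : ∀ ω, Continuous fun t => P t ω) (Z : Ω → α) :
    Continuous fun t => ent (P t) Z := by
  have hpr : ∀ z, Continuous fun t => pr (P t) Z z := fun z =>
    continuous_finset_sum _ (fun ω _ => h ω)
  have hrw : (fun t => ent (P t) Z) =
      fun t => -∑ z, (pr (P t) Z z * Real.log (pr (P t) Z z)) * (Real.log 2)⁻¹ := by
    funext t
    rw [ent]
    congr 1
    refine Finset.sum_congr rfl fun z _ => ?_
    rw [Real.logb]
    ring
  rw [hrw]
  apply Continuous.neg
  apply continuous_finset_sum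
  intro z _
  exact (Real.continuous_mul_log.comp (hpr z)).mul continuous_const
end Cont

section YX
variable {X Y U : Type*} [Fintype X] [DecidableEq X] [Fintype Y] [DecidableEq Y]
  [Fintype U] [DecidableEq U]

lemma pr_jointQ_YX (q : X × Y → ℝ) {w : X → Y → U → ℝ} (hw : ∀ x y, ∑ u, w x y u = 1)
    (y : Y) (x : X) :
    pr (jointQ q w) (fun ω => (ω.2.1, ω.1)) (y, x) = q (x, y) := by
  have hswap : Function.Injective (fun t : X × Y => (t.2, t.1)) := fun a b h => by
    simpa [Prod.ext_iff, and_comm] using h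
  have := pr_comp (jointQ q w) hswap (fun ω => (ω.1, ω.2.1)) (x, y)
  simp only at this
  rw [this, pr_jointQ_XY q hw x y]
end YX

theorem stmt12' {X Y : Type*} [Fintype X] [DecidableEq X] [Fintype Y] [DecidableEq Y]
    (q : X × Y → ℝ) (hq : IsPMF q)
    (hexists : ∃ w : X → Y → Fin (Fintype.card X * Fintype.card Y + 2) → ℝ,
      CondPMF w ∧
      cmi (jointQ q w) (fun ω => ω.2.2) (fun ω => ω.2.1) (fun ω => ω.1) = 0 ∧
      cmi (jointQ q w) (fun ω => ω.2.2) (fun ω => ω.1) (fun ω => ω.2.1) = 0 ∧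
      mi q Prod.fst Prod.snd
        ≤ mi (jointQ q w) (fun ω => ω.1) (fun ω => ω.2.2)
          + mi (jointQ q w) (fun ω => ω.2.1) (fun ω => ω.2.2)) :
    sInf { z : ℝ | ∃ w : X → Y → Fin (Fintype.card X * Fintype.card Y + 2) → ℝ,
        CondPMF w ∧ z = max (cmiXY q w) (miXYU q w) }
      = mi q Prod.fst Prod.snd / 2 := by
  classical
  obtain ⟨w, hw, ht1, ht2, hmm⟩ := hexists
  obtain ⟨hq0, hq1⟩ := hq
  set u0 : Fin (Fintype.card X * Fintype.card Y + 2) := ⟨0, by omega⟩ with hu0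
  set δ : X → Y → Fin (Fintype.card X * Fintype.card Y + 2) → ℝ :=
    fun _ _ u => if u = u0 then 1 else 0 with hδ
  have hδc : CondPMF δ := ⟨fun x y u => by dsimp [δ]; split_ifs <;> norm_num,
    fun x y => dirac_cond u0 x y⟩
  set wm : ℝ → X → Y → Fin (Fintype.card X * Fintype.card Y + 2) → ℝ :=
    fun t x y u => t * w x y u + (1 - t) * δ x y u with hwm
  have hwm_sum : ∀ t x y, ∑ u, wm t x y u = 1 := by
    intro t x y
    simp only [wm, Finset.sum_add_distrib, ← Finset.mul_sum, hw.2, hδc.2 x y]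
    ring
  have hwm_c : ∀ t ∈ Set.Icc (0:ℝ) 1, CondPMF (wm t) := fun t ht =>
    ⟨fun x y u => add_nonneg (mul_nonneg ht.1 (hw.1 x y u))
      (mul_nonneg (by linarith [ht.2]) (hδc.1 x y u)), hwm_sum t⟩
  have hjm : ∀ t : ℝ, jointQ q (wm t) =
      fun ω => t * jointQ q w ω + (1 - t) * jointQ q δ ω := by
    intro t
    funext ω
    simp only [jointQ, wm]
    ring
  have hp1 : ∀ ω, 0 ≤ jointQ q w ω := fun ω => mul_nonneg (hq0 _) (hw.1 _ _ _)
  have hp0 : ∀ ω, 0 ≤ jointQ q δ ω := fun ω => mul_nonneg (hq0 _) (hδc.1 ω.1 ω.2.1 ω.2.2)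
  -- double Markov property along the path
  have key0 : ∀ t ∈ Set.Icc (0:ℝ) 1,
      cmi (jointQ q (wm t)) (fun ω => ω.2.2) (fun ω => ω.2.1) (fun ω => ω.1) = 0 ∧
      cmi (jointQ q (wm t)) (fun ω => ω.2.2) (fun ω => ω.1) (fun ω => ω.2.1) = 0 := by
    intro t ht
    have hpt : ∀ ω, 0 ≤ jointQ q (wm t) ω := fun ω =>
      mul_nonneg (hq0 _) ((hwm_c t ht).1 ω.1 ω.2.1 ω.2.2)
    constructor
    · have hle : cmi (jointQ q (wm t)) (fun ω => ω.2.2) (fun ω => ω.2.1) (fun ω => ω.1) ≤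
          t * cmi (jointQ q w) (fun ω => ω.2.2) (fun ω => ω.2.1) (fun ω => ω.1)
          + (1 - t) * cmi (jointQ q δ) (fun ω => ω.2.2) (fun ω => ω.2.1) (fun ω => ω.1) := by
        rw [hjm t]
        exact cmi_mix_le hp0 hp1 ht.1 (by linarith [ht.2]) (by ring) _ _ _
          (fun z => by
            rw [show z = (z.1, z.2) from rfl, pr_jointQ_YX q (fun x y => hδc.2 x y) z.1 z.2,
              pr_jointQ_YX q hw.2 z.1 z.2])
      rw [ht1, hδ, cmi_dirac_YX q u0] at hle
      have hge := cmi_nonneg hpt (fun ω => ω.2.2) (fun ω => ω.2.1) (fun ω => ω.1)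
      linarith
    · have hle : cmi (jointQ q (wm t)) (fun ω => ω.2.2) (fun ω => ω.1) (fun ω => ω.2.1) ≤
          t * cmi (jointQ q w) (fun ω => ω.2.2) (fun ω => ω.1) (fun ω => ω.2.1)
          + (1 - t) * cmi (jointQ q δ) (fun ω => ω.2.2) (fun ω => ω.1) (fun ω => ω.2.1) := by
        rw [hjm t]
        exact cmi_mix_le hp0 hp1 ht.1 (by linarith [ht.2]) (by ring) _ _ _
          (fun z => by
            rw [show z = (z.1, z.2) from rfl, pr_jointQ_XY q (fun x y => hδc.2 x y) z.1 z.2,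
              pr_jointQ_XY q hw.2 z.1 z.2])
      rw [ht2, hδ, cmi_dirac_XY q u0] at hle
      have hge := cmi_nonneg hpt (fun ω => ω.2.2) (fun ω => ω.1) (fun ω => ω.2.1)
      linarith
  have hsumI : ∀ t ∈ Set.Icc (0:ℝ) 1,
      cmiXY q (wm t) + miXYU q (wm t) = mi q Prod.fst Prod.snd := by
    intro t ht
    have h1 := identity1 q (wm t) (hwm_sum t)
    rw [(key0 t ht).1, (key0 t ht).2] at h1
    linarith
  have hwm1 : wm 1 = w := by funext x y u; simp [wm]
  have hwm0 : wm 0 = δ := by funext x y u; simp [wm]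
  have hc1 : cmiXY q w ≤ mi q Prod.fst Prod.snd / 2 := by
    have h1 := identity1 q w hw.2
    rw [ht1, ht2] at h1
    have h2 := identity2 q w hw.2
    linarith
  have hc0 : cmiXY q (wm 0) = mi q Prod.fst Prod.snd := by
    rw [hwm0, hδ]
    exact cmiXY_dirac q u0 hq1
  have hIc : 0 ≤ mi q Prod.fst Prod.snd := mi_nonneg hq0 hq1 _ _
  have hcont : ContinuousOn (fun t => cmiXY q (wm t)) (Set.Icc (0:ℝ) 1) := by
    apply Continuous.continuousOn
    have hc : ∀ ω : X × Y × Fin (Fintype.card X * Fintype.card Y + 2),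
        Continuous fun t : ℝ => jointQ q (wm t) ω := by
      intro ω
      simp only [jointQ, wm]
      fun_prop
    simp only [cmiXY, cmi, centH]
    exact ((((ent_cont hc _).sub (ent_cont hc _)).add
      ((ent_cont hc _).sub (ent_cont hc _))).sub ((ent_cont hc _).sub (ent_cont hc _)))
  have hmem : mi q Prod.fst Prod.snd / 2 ∈
      Set.Icc (cmiXY q (wm 1)) (cmiXY q (wm 0)) := by
    rw [hwm1, hc0]
    exact ⟨hc1, by linarith⟩
  obtain ⟨t0, ht0mem, ht0⟩ := intermediate_value_Icc' (by norm_num : (0:ℝ) ≤ 1) hcont hmem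
  have hS : mi q Prod.fst Prod.snd / 2 ∈
      { z : ℝ | ∃ w' : X → Y → Fin (Fintype.card X * Fintype.card Y + 2) → ℝ,
        CondPMF w' ∧ z = max (cmiXY q w') (miXYU q w') } := by
    refine ⟨wm t0, hwm_c t0 ht0mem, ?_⟩
    have hc : cmiXY q (wm t0) = mi q Prod.fst Prod.snd / 2 := ht0
    have hm : miXYU q (wm t0) = mi q Prod.fst Prod.snd / 2 := by
      have := hsumI t0 ht0mem
      linarith
    rw [hc, hm, max_self]
  have hlb : ∀ z ∈ { z : ℝ | ∃ w' : X → Y → Fin (Fintype.card X * Fintype.card Y + 2) → ℝ,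
      CondPMF w' ∧ z = max (cmiXY q w') (miXYU q w') }, mi q Prod.fst Prod.snd / 2 ≤ z := by
    rintro z ⟨w', hw', rfl⟩
    have hpn : ∀ ω, 0 ≤ jointQ q w' ω := fun ω => mul_nonneg (hq0 _) (hw'.1 ω.1 ω.2.1 ω.2.2)
    have h1 := identity1 q w' hw'.2
    have n1 := cmi_nonneg hpn (fun ω => ω.2.2) (fun ω => ω.2.1) (fun ω => ω.1)
    have n2 := cmi_nonneg hpn (fun ω => ω.2.2) (fun ω => ω.1) (fun ω => ω.2.1)
    have l1 := le_max_left (cmiXY q w') (miXYU q w')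
    have l2 := le_max_right (cmiXY q w') (miXYU q w')
    linarith
  exact le_antisymm (csInf_le ⟨mi q Prod.fst Prod.snd / 2, hlb⟩ hS)
    (le_csInf ⟨mi q Prod.fst Prod.snd / 2, hS⟩ hlb)

/-- If there is a conditional pmf `w(u|x,y)` with `I(U;Y|X) = 0`, `I(U;X|Y) = 0`, and
`I(X;Y) ≤ I(X;U) + I(Y;U)`, then `min_p max{I(X;Y|U), I(X,Y;U)} = I(X;Y)/2`. -/
theorem stmt12 {X Y : Type*} [Fintype X] [DecidableEq X] [Fintype Y] [DecidableEq Y]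
    (q : X × Y → ℝ) (hq : IsPMF q)
    (hexists : ∃ w : X → Y → Fin (Fintype.card X * Fintype.card Y + 2) → ℝ,
      CondPMF w ∧
      cmi (jointQ q w) (fun ω => ω.2.2) (fun ω => ω.2.1) (fun ω => ω.1) = 0 ∧
      cmi (jointQ q w) (fun ω => ω.2.2) (fun ω => ω.1) (fun ω => ω.2.1) = 0 ∧
      mi q Prod.fst Prod.snd
        ≤ mi (jointQ q w) (fun ω => ω.1) (fun ω => ω.2.2)
          + mi (jointQ q w) (fun ω => ω.2.1) (fun ω => ω.2.2)) :
    sInf { z : ℝ | ∃ w : X → Y → Fin (Fintype.card X * Fintype.card Y + 2) → ℝ,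
        CondPMF w ∧ z = max (cmiXY q w) (miXYU q w) }
      = mi q Prod.fst Prod.snd / 2 := by
  exact stmt12' q hq hexists
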